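/- Let (λ_n)_{n≥1} be a sequence of positive real numbers and let C > 0 be a constant such that for all integers n, k ≥ 1 one has exp(-C·√k)·λ_n·λ_k ≤ λ_{n+k} ≤ exp(C·√k)·λ_n·λ_k. Then there exist ρ > 0 and D > 0 such that for all integers n ≥ 1, ρ^n·exp(-D·√n) ≤ λ_n ≤ ρ^n·exp(D·√n). -/

import Mathlib

private lemma sqrt_two_pow (m : ℕ) : Real.sqrt ((2:ℝ) ^ m) = (Real.sqrt 2) ^ m := by
  induction m with
  | zero => simp
  | succ m ih =>
    rw [pow_succ, pow_succ, Real.sqrt_mul (by positivity), ih]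

/-- Weak multiplicativity with error `exp(C√k)` implies existence of an exponent `ρ`
with error `exp(O(√n))`. -/
theorem weak_multiplicativity_exponent
    (lam : ℕ → ℝ) (C : ℝ) (hC : 0 < C)
    (hpos : ∀ n : ℕ, 1 ≤ n → 0 < lam n)
    (hmul : ∀ n k : ℕ, 1 ≤ n → 1 ≤ k →
      Real.exp (-C * Real.sqrt k) * lam n * lam k ≤ lam (n + k) ∧
      lam (n + k) ≤ Real.exp (C * Real.sqrt k) * lam n * lam k) :
    ∃ ρ : ℝ, 0 < ρ ∧ ∃ D : ℝ, 0 < D ∧ ∀ n : ℕ, 1 ≤ n →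
      ρ ^ n * Real.exp (-D * Real.sqrt n) ≤ lam n ∧
      lam n ≤ ρ ^ n * Real.exp (D * Real.sqrt n) := by
  set a : ℕ → ℝ := fun n => Real.log (lam n) with ha
  -- key additive estimate
  have key : ∀ n k : ℕ, 1 ≤ n → 1 ≤ k →
      |a (n + k) - a n - a k| ≤ C * Real.sqrt k := by
    intro n k hn hk
    obtain ⟨h1, h2⟩ := hmul n k hn hk
    have hpn := hpos n hn
    have hpk := hpos k hk
    have hpnk := hpos (n + k) (by omega)
    have e1 : Real.log (Real.exp (-C * Real.sqrt k) * lam n * lam k)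
        = -C * Real.sqrt k + a n + a k := by
      rw [Real.log_mul (by positivity) (ne_of_gt hpk),
        Real.log_mul (by positivity) (ne_of_gt hpn), Real.log_exp]
    have e2 : Real.log (Real.exp (C * Real.sqrt k) * lam n * lam k)
        = C * Real.sqrt k + a n + a k := by
      rw [Real.log_mul (by positivity) (ne_of_gt hpk),
        Real.log_mul (by positivity) (ne_of_gt hpn), Real.log_exp]
    have l1 := Real.log_le_log (by positivity) h1
    have l2 := Real.log_le_log hpnk h2
    rw [e1] at l1; rw [e2] at l2
    rw [abs_le]; constructor <;> simp only [ha] at * <;> linarith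
  set r : ℝ := Real.sqrt 2 / 2 with hrdef
  have hs2 : (0:ℝ) < Real.sqrt 2 := Real.sqrt_pos.mpr (by norm_num)
  have hs2sq : Real.sqrt 2 * Real.sqrt 2 = 2 := Real.mul_self_sqrt (by norm_num)
  have hs2lt : Real.sqrt 2 < 2 := by nlinarith
  have hr0 : (0:ℝ) < r := by positivity
  have hr1 : r < 1 := by rw [hrdef]; linarith
  set c : ℕ → ℝ := fun m => a (2 ^ m) / 2 ^ m with hc
  have hstep : ∀ m : ℕ, dist (c m) (c (m + 1)) ≤ (C / 2) * r ^ m := by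
    intro m
    have hk := key (2 ^ m) (2 ^ m) (Nat.one_le_two_pow) (Nat.one_le_two_pow)
    have h2m : ((2:ℕ) ^ m + 2 ^ m) = 2 ^ (m + 1) := by ring
    rw [h2m] at hk
    push_cast at hk
    rw [sqrt_two_pow] at hk
    have hpow : ((2:ℝ) ^ m) ≠ 0 := by positivity
    have hpow1 : ((2:ℝ) ^ (m + 1)) ≠ 0 := by positivity
    have hd : dist (c m) (c (m + 1))
        = |a (2 ^ (m + 1)) - a (2 ^ m) - a (2 ^ m)| / 2 ^ (m + 1) := by
      rw [Real.dist_eq]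
      show |a (2 ^ m) / 2 ^ m - a (2 ^ (m + 1)) / 2 ^ (m + 1)| = _
      rw [show a (2 ^ m) / 2 ^ m - a (2 ^ (m + 1)) / 2 ^ (m + 1)
          = -((a (2 ^ (m + 1)) - a (2 ^ m) - a (2 ^ m)) / 2 ^ (m + 1)) from by
            field_simp; ring,
        abs_neg, abs_div, abs_of_pos (by positivity : (0:ℝ) < 2 ^ (m + 1))]
    rw [hd]
    rw [div_le_iff₀ (by positivity)]
    calc |a (2 ^ (m + 1)) - a (2 ^ m) - a (2 ^ m)| ≤ C * Real.sqrt 2 ^ m := hk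
      _ = C / 2 * r ^ m * 2 ^ (m + 1) := by
          rw [hrdef, div_pow, pow_succ]
          field_simp
  have hcauchy : CauchySeq c := cauchySeq_of_le_geometric r (C / 2) hr1 hstep
  obtain ⟨L, hL⟩ := cauchySeq_tendsto_of_complete hcauchy
  have hdist : ∀ m : ℕ, dist (c m) L ≤ C / 2 * r ^ m / (1 - r) :=
    dist_le_of_le_geometric_of_tendsto r (C / 2) hr1 hstep hL
  set C' : ℝ := C / 2 / (1 - r) with hC'def
  have hC' : 0 < C' := by apply div_pos (by linarith) (by linarith)
  -- estimate on powers of two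
  have hbase : ∀ m : ℕ, |a (2 ^ m) - L * 2 ^ m| ≤ C' * Real.sqrt 2 ^ m := by
    intro m
    have := hdist m
    rw [Real.dist_eq, hc] at this
    have hpow : (0:ℝ) < (2:ℝ) ^ m := by positivity
    have h2 : |a (2 ^ m) - L * 2 ^ m| = |a (2 ^ m) / 2 ^ m - L| * 2 ^ m := by
      rw [← abs_of_pos hpow, ← abs_mul]
      congr 1
      field_simp
      rw [abs_of_pos hpow]
    rw [h2]
    calc |a (2 ^ m) / 2 ^ m - L| * 2 ^ m ≤ (C / 2 * r ^ m / (1 - r)) * 2 ^ m := by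
          apply mul_le_mul_of_nonneg_right this (le_of_lt hpow)
      _ = C' * (r * 2) ^ m := by rw [hC'def, mul_pow]; ring
      _ = C' * Real.sqrt 2 ^ m := by
          congr 2
          rw [hrdef]; field_simp
  set K : ℝ := (C + C') / (1 - r) with hKdef
  have hK : 0 < K := by apply div_pos (by linarith) (by linarith)
  have hC'K : C' ≤ K := by
    rw [hKdef, le_div_iff₀ (by linarith)]
    nlinarith
  -- main estimate by strong induction
  have main : ∀ n : ℕ, 1 ≤ n → |a n - L * n| ≤ K * Real.sqrt n := by
    intro n
    induction n using Nat.strong_induction_on with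
    | _ n ih =>
      intro hn
      set m := Nat.log 2 n with hm
      have h1 : 2 ^ m ≤ n := Nat.pow_log_le_self 2 (by omega)
      have h2 : n < 2 ^ (m + 1) := Nat.lt_pow_succ_log_self (by norm_num) n
      have hsqn : Real.sqrt 2 ^ m ≤ Real.sqrt n := by
        rw [← sqrt_two_pow]
        apply Real.sqrt_le_sqrt
        exact_mod_cast h1
      rcases Nat.eq_or_lt_of_le h1 with heq | hlt
      · -- n = 2 ^ m
        rw [← heq]
        have hc1 : (((2:ℕ) ^ m : ℕ) : ℝ) = (2:ℝ) ^ m := by push_cast; ring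
        rw [hc1, sqrt_two_pow]
        exact (hbase m).trans (mul_le_mul_of_nonneg_right hC'K (by positivity))
      · -- n = 2 ^ m + t with 1 ≤ t < 2 ^ m
        set t := n - 2 ^ m with ht
        have ht1 : 1 ≤ t := by omega
        have htlt : t < n := by
          have : 1 ≤ 2 ^ m := Nat.one_le_two_pow
          omega
        have hnt : n = 2 ^ m + t := by omega
        have h2t : 2 * t ≤ n := by omega
        have hkey := key (2 ^ m) t Nat.one_le_two_pow ht1
        rw [← hnt] at hkey
        have hih := ih t htlt ht1
        have hb := hbase m
        -- √t ≤ r * √n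
        have hsqt : Real.sqrt t ≤ r * Real.sqrt n := by
          have h1' : (t:ℝ) ≤ (n:ℝ) / 2 := by
            rw [le_div_iff₀ (by norm_num)]
            exact_mod_cast by linarith [h2t]
          calc Real.sqrt t ≤ Real.sqrt ((n:ℝ) / 2) := Real.sqrt_le_sqrt h1'
            _ = Real.sqrt n / Real.sqrt 2 :=
                Real.sqrt_div (by positivity) 2
            _ = r * Real.sqrt n := by
                rw [hrdef]
                field_simp
                linear_combination (-1 : ℝ) * hs2sq
        have hcast2 : ((2:ℕ) ^ m : ℝ) = (2:ℝ) ^ m := by push_cast; ring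
        have hsum : |a n - L * n| ≤
            C * Real.sqrt t + C' * Real.sqrt 2 ^ m + K * Real.sqrt t := by
          have e : a n - L * n =
              (a n - a (2 ^ m) - a t) + (a (2 ^ m) - L * 2 ^ m) + (a t - L * t) := by
            rw [hnt]; push_cast; ring
          rw [e]
          calc |(a n - a (2 ^ m) - a t) + (a (2 ^ m) - L * 2 ^ m) + (a t - L * t)|
              ≤ |a n - a (2 ^ m) - a t| + |a (2 ^ m) - L * 2 ^ m| + |a t - L * t| := by
                apply (abs_add_le _ _).trans
                gcongr
                exact abs_add_le _ _
            _ ≤ C * Real.sqrt t + C' * Real.sqrt 2 ^ m + K * Real.sqrt t := by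
                gcongr <;> first
                  | exact hkey
                  | exact hb
                  | exact hih
        calc |a n - L * n| ≤ C * Real.sqrt t + C' * Real.sqrt 2 ^ m + K * Real.sqrt t := hsum
          _ ≤ C * (r * Real.sqrt n) + C' * Real.sqrt n + K * (r * Real.sqrt n) := by
              gcongr
          _ ≤ K * Real.sqrt n := by
              have hKr : (C + K) * r + C' ≤ K := by
                have : K * (1 - r) = C + C' := by
                  rw [hKdef]
                  exact div_mul_cancel₀ _ (by linarith : (1:ℝ) - r ≠ 0)
                nlinarith
              nlinarith [Real.sqrt_nonneg (n:ℝ)]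
  -- conclude
  refine ⟨Real.exp L, Real.exp_pos L, K, hK, fun n hn => ?_⟩
  have := main n hn
  rw [abs_le] at this
  have hlam : lam n = Real.exp (a n) := (Real.exp_log (hpos n hn)).symm
  have hpw : Real.exp L ^ n = Real.exp (L * n) := by
    rw [← Real.exp_nat_mul, mul_comm]
  constructor
  · rw [hlam, hpw, ← Real.exp_add]
    apply Real.exp_le_exp.mpr
    linarith [this.1]
  · rw [hlam, hpw, ← Real.exp_add]
    apply Real.exp_le_exp.mpr
    linarith [this.2]
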